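/- Assume that for each (x,y) ∈ E₁ × E₂ the functions (p,z) ↦ f̃(p,z,x) and (p,w) ↦ g̃(p,w,y) are upper semi-continuous (jointly in their first two variables). Then SEP(f,g,C,Q) is Levitin–Polyak well-posed by perturbations if and only if S(ε) ≠ ∅ for every ε > 0 and diam(S(ε)) → 0 as ε → 0⁺. -/

import Mathlib

open Filter Metric Topology Set

/-- The solution set of the split equilibrium problem SEP(f,g,C,Q). -/
def SEPSol {E₁ E₂ : Type*} [NormedAddCommGroup E₁] [NormedSpace ℝ E₁]
    [NormedAddCommGroup E₂] [NormedSpace ℝ E₂]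
    (C : Set E₁) (Q : Set E₂) (A : E₁ →L[ℝ] E₂)
    (f : E₁ → E₁ → ℝ) (g : E₂ → E₂ → ℝ) : Set (E₁ × E₂) :=
  {u | u.1 ∈ C ∧ u.2 ∈ Q ∧ u.2 = A u.1 ∧
    (∀ x ∈ C, 0 ≤ f u.1 x) ∧ (∀ y ∈ Q, 0 ≤ g u.2 y)}

/-- The approximate solution set S(ε) of the perturbed split equilibrium problem,
where the perturbation parameter ranges over the closed ball M of radius `r`
centered at `pstar`, intersected with the closed ball of radius `ε` around `pstar`. -/
def approxSol {E₁ E₂ N : Type*} [NormedAddCommGroup E₁] [NormedSpace ℝ E₁]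
    [NormedAddCommGroup E₂] [NormedSpace ℝ E₂] [NormedAddCommGroup N] [NormedSpace ℝ N]
    (C : Set E₁) (Q : Set E₂) (A : E₁ →L[ℝ] E₂) (pstar : N) (r : ℝ)
    (ft : N → E₁ → E₁ → ℝ) (gt : N → E₂ → E₂ → ℝ) (ε : ℝ) : Set (E₁ × E₂) :=
  {u | ∃ p : N, ‖p - pstar‖ ≤ r ∧ ‖p - pstar‖ ≤ ε ∧
    infDist u.1 C ≤ ε ∧ infDist u.2 Q ≤ ε ∧ ‖u.2 - A u.1‖ ≤ ε ∧
    (∀ x ∈ C, -ε ≤ ft p u.1 x) ∧ (∀ y ∈ Q, -ε ≤ gt p u.2 y)}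

/-- `u` is a generalized approximating sequence corresponding to the parameter
sequence `p` (which lies in the ball M of radius `r` around `pstar` and converges
to `pstar`) for the split equilibrium problem. -/
def GenApproxSeq {E₁ E₂ N : Type*} [NormedAddCommGroup E₁] [NormedSpace ℝ E₁]
    [NormedAddCommGroup E₂] [NormedSpace ℝ E₂] [NormedAddCommGroup N] [NormedSpace ℝ N]
    (C : Set E₁) (Q : Set E₂) (A : E₁ →L[ℝ] E₂) (pstar : N) (r : ℝ)
    (ft : N → E₁ → E₁ → ℝ) (gt : N → E₂ → E₂ → ℝ)
    (p : ℕ → N) (u : ℕ → E₁ × E₂) : Prop :=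
  (∀ n, ‖p n - pstar‖ ≤ r) ∧ Tendsto p atTop (nhds pstar) ∧
  ∃ ε : ℕ → ℝ, (∀ n, 0 < ε n) ∧ Tendsto ε atTop (nhds 0) ∧
    ∀ n, infDist (u n).1 C ≤ ε n ∧ infDist (u n).2 Q ≤ ε n ∧
      ‖(u n).2 - A (u n).1‖ ≤ ε n ∧
      (∀ x ∈ C, -(ε n) ≤ ft (p n) (u n).1 x) ∧
      (∀ y ∈ Q, -(ε n) ≤ gt (p n) (u n).2 y)

/-- SEP(f,g,C,Q) is Levitin–Polyak well-posed by perturbations: the solution set is a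
singleton and every generalized approximating sequence converges to the unique solution. -/
def LPWellPosedPerturb {E₁ E₂ N : Type*} [NormedAddCommGroup E₁] [NormedSpace ℝ E₁]
    [NormedAddCommGroup E₂] [NormedSpace ℝ E₂] [NormedAddCommGroup N] [NormedSpace ℝ N]
    (C : Set E₁) (Q : Set E₂) (A : E₁ →L[ℝ] E₂) (pstar : N) (r : ℝ)
    (ft : N → E₁ → E₁ → ℝ) (gt : N → E₂ → E₂ → ℝ) : Prop :=
  ∃ ustar : E₁ × E₂, SEPSol C Q A (ft pstar) (gt pstar) = {ustar} ∧
    ∀ (p : ℕ → N) (u : ℕ → E₁ × E₂), GenApproxSeq C Q A pstar r ft gt p u →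
      Tendsto u atTop (nhds ustar)

/-- SEP(f,g,C,Q) is Levitin–Polyak well-posed by perturbations in the generalized sense:
the solution set is nonempty and every generalized approximating sequence has a
subsequence converging to some solution. -/
def GenLPWellPosedPerturb {E₁ E₂ N : Type*} [NormedAddCommGroup E₁] [NormedSpace ℝ E₁]
    [NormedAddCommGroup E₂] [NormedSpace ℝ E₂] [NormedAddCommGroup N] [NormedSpace ℝ N]
    (C : Set E₁) (Q : Set E₂) (A : E₁ →L[ℝ] E₂) (pstar : N) (r : ℝ)
    (ft : N → E₁ → E₁ → ℝ) (gt : N → E₂ → E₂ → ℝ) : Prop :=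
  (SEPSol C Q A (ft pstar) (gt pstar)).Nonempty ∧
    ∀ (p : ℕ → N) (u : ℕ → E₁ × E₂), GenApproxSeq C Q A pstar r ft gt p u →
      ∃ ustar ∈ SEPSol C Q A (ft pstar) (gt pstar), ∃ φ : ℕ → ℕ, StrictMono φ ∧
        Tendsto (u ∘ φ) atTop (nhds ustar)

/-- The Kuratowski measure of noncompactness: the infimum of all `ε > 0` such that the
set can be covered by finitely many sets, each of diameter `< ε`. -/
noncomputable def kuratowskiMNC {X : Type*} [PseudoEMetricSpace X] (s : Set X) : ENNReal :=
  sInf {ε : ENNReal | 0 < ε ∧ ∃ t : Finset (Set X), (s ⊆ ⋃ a ∈ t, (a : Set X)) ∧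
    ∀ a ∈ t, EMetric.diam a < ε}

section Helpers

set_option linter.unusedSectionVars false

variable {E₁ E₂ N : Type*} [NormedAddCommGroup E₁] [NormedSpace ℝ E₁]
    [NormedAddCommGroup E₂] [NormedSpace ℝ E₂] [NormedAddCommGroup N] [NormedSpace ℝ N]
    (C : Set E₁) (Q : Set E₂) (A : E₁ →L[ℝ] E₂) (pstar : N) (r : ℝ)
    (ft : N → E₁ → E₁ → ℝ) (gt : N → E₂ → E₂ → ℝ)

lemma approxSol_mono {ε ε' : ℝ} (h : ε ≤ ε') :
    approxSol C Q A pstar r ft gt ε ⊆ approxSol C Q A pstar r ft gt ε' := by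
  rintro u ⟨p, h1, h2, h3, h4, h5, h6, h7⟩
  exact ⟨p, h1, h2.trans h, h3.trans h, h4.trans h, h5.trans h,
    fun x hx => le_trans (by linarith) (h6 x hx),
    fun y hy => le_trans (by linarith) (h7 y hy)⟩

lemma sol_mem_approx (hr : 0 ≤ r) {u : E₁ × E₂}
    (hu : u ∈ SEPSol C Q A (ft pstar) (gt pstar)) {ε : ℝ} (hε : 0 ≤ ε) :
    u ∈ approxSol C Q A pstar r ft gt ε := by
  obtain ⟨h1, h2, h3, h4, h5⟩ := hu
  refine ⟨pstar, by simp [hr], by simp [hε], ?_, ?_, ?_, ?_, ?_⟩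
  · rw [infDist_zero_of_mem h1]; exact hε
  · rw [infDist_zero_of_mem h2]; exact hε
  · rw [h3]; simpa using hε
  · exact fun x hx => le_trans (by linarith) (h4 x hx)
  · exact fun y hy => le_trans (by linarith) (h5 y hy)

lemma genApproxSeq_of_mem {ε : ℕ → ℝ} (hpos : ∀ n, 0 < ε n)
    (h0 : Tendsto ε atTop (nhds 0)) {u : ℕ → E₁ × E₂}
    (hu : ∀ n, u n ∈ approxSol C Q A pstar r ft gt (ε n)) :
    ∃ p : ℕ → N, (∀ n, ‖p n - pstar‖ ≤ r) ∧ Tendsto p atTop (nhds pstar) ∧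
      (∀ n, 0 < ε n) ∧ Tendsto ε atTop (nhds 0) ∧
      ∀ n, infDist (u n).1 C ≤ ε n ∧ infDist (u n).2 Q ≤ ε n ∧
        ‖(u n).2 - A (u n).1‖ ≤ ε n ∧
        (∀ x ∈ C, -(ε n) ≤ ft (p n) (u n).1 x) ∧
        (∀ y ∈ Q, -(ε n) ≤ gt (p n) (u n).2 y) := by
  choose p h1 h2 h3 h4 h5 h6 h7 using hu
  refine ⟨p, h1, ?_, hpos, h0, fun n => ⟨h3 n, h4 n, h5 n, h6 n, h7 n⟩⟩
  rw [tendsto_iff_norm_sub_tendsto_zero]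
  exact squeeze_zero (fun n => norm_nonneg _) h2 h0

lemma limit_mem_sol (hCne : C.Nonempty) (hCcl : IsClosed C)
    (hQne : Q.Nonempty) (hQcl : IsClosed Q)
    (hfusc : ∀ x : E₁, UpperSemicontinuous fun q : N × E₁ => ft q.1 q.2 x)
    (hgusc : ∀ y : E₂, UpperSemicontinuous fun q : N × E₂ => gt q.1 q.2 y)
    {ε : ℕ → ℝ} (h0 : Tendsto ε atTop (nhds 0)) {u : ℕ → E₁ × E₂}
    (hu : ∀ n, u n ∈ approxSol C Q A pstar r ft gt (ε n))
    {w : E₁ × E₂} (hw : Tendsto u atTop (nhds w)) :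
    w ∈ SEPSol C Q A (ft pstar) (gt pstar) := by
  choose p h1 h2 h3 h4 h5 h6 h7 using hu
  have hp : Tendsto p atTop (nhds pstar) := by
    rw [tendsto_iff_norm_sub_tendsto_zero]
    exact squeeze_zero (fun n => norm_nonneg _) h2 h0
  have hu1 : Tendsto (fun n => (u n).1) atTop (nhds w.1) := (continuous_fst.tendsto _).comp hw
  have hu2 : Tendsto (fun n => (u n).2) atTop (nhds w.2) := (continuous_snd.tendsto _).comp hw
  have hneg : Tendsto (fun n => -(ε n)) atTop (nhds 0) := by simpa using h0.neg
  have hwC : w.1 ∈ C := by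
    have : infDist w.1 C ≤ 0 :=
      le_of_tendsto_of_tendsto' (((continuous_infDist_pt C).tendsto _).comp hu1) h0 h3
    exact (hCcl.mem_iff_infDist_zero hCne).2 (le_antisymm this (infDist_nonneg))
  have hwQ : w.2 ∈ Q := by
    have : infDist w.2 Q ≤ 0 :=
      le_of_tendsto_of_tendsto' (((continuous_infDist_pt Q).tendsto _).comp hu2) h0 h4
    exact (hQcl.mem_iff_infDist_zero hQne).2 (le_antisymm this (infDist_nonneg))
  have hwA : w.2 = A w.1 := by
    have hcont : Tendsto (fun n => ‖(u n).2 - A (u n).1‖) atTop (nhds ‖w.2 - A w.1‖) :=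
      ((hu2.sub ((A.continuous.tendsto _).comp hu1)).norm)
    have : ‖w.2 - A w.1‖ ≤ 0 := le_of_tendsto_of_tendsto' hcont h0 h5
    rw [← sub_eq_zero]
    exact norm_le_zero_iff.1 this
  refine ⟨hwC, hwQ, hwA, ?_, ?_⟩
  · intro x hx
    by_contra hlt
    push_neg at hlt
    have hc : ft pstar w.1 x / 2 < 0 := by linarith
    have husc : ∀ᶠ q : N × E₁ in nhds (pstar, w.1),
        ft q.1 q.2 x < ft pstar w.1 x / 2 :=
      hfusc x (pstar, w.1) (ft pstar w.1 x / 2) (by linarith)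
    have hten : Tendsto (fun n => (p n, (u n).1)) atTop (nhds (pstar, w.1)) :=
      hp.prodMk_nhds hu1
    have h8 : ∀ᶠ n in atTop, ft (p n) (u n).1 x < ft pstar w.1 x / 2 :=
      hten.eventually husc
    have h9 : ∀ᶠ n in atTop, ft pstar w.1 x / 2 < -(ε n) :=
      hneg.eventually (eventually_gt_nhds hc)
    obtain ⟨n, hn8, hn9⟩ := (h8.and h9).exists
    exact absurd (h6 n x hx) (by linarith)
  · intro y hy
    by_contra hlt
    push_neg at hlt
    have hc : gt pstar w.2 y / 2 < 0 := by linarith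
    have husc : ∀ᶠ q : N × E₂ in nhds (pstar, w.2),
        gt q.1 q.2 y < gt pstar w.2 y / 2 :=
      hgusc y (pstar, w.2) (gt pstar w.2 y / 2) (by linarith)
    have hten : Tendsto (fun n => (p n, (u n).2)) atTop (nhds (pstar, w.2)) :=
      hp.prodMk_nhds hu2
    have h8 : ∀ᶠ n in atTop, gt (p n) (u n).2 y < gt pstar w.2 y / 2 :=
      hten.eventually husc
    have h9 : ∀ᶠ n in atTop, gt pstar w.2 y / 2 < -(ε n) :=
      hneg.eventually (eventually_gt_nhds hc)
    obtain ⟨n, hn8, hn9⟩ := (h8.and h9).exists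
    exact absurd (h7 n y hy) (by linarith)

end Helpers

/-- **Theorem 4.2.** If the perturbed bifunctions are upper semicontinuous in their first
two variables, then SEP(f,g,C,Q) is Levitin–Polyak well-posed by perturbations if and
only if S(ε) ≠ ∅ for every ε > 0 and diam(S(ε)) → 0 as ε → 0⁺. -/
theorem sep_lp_wellposed_iff_approx_nonempty_diam_tendsto_zero
    {E₁ E₂ N : Type*} [NormedAddCommGroup E₁] [NormedSpace ℝ E₁] [CompleteSpace E₁]
    [NormedAddCommGroup E₂] [NormedSpace ℝ E₂] [CompleteSpace E₂]
    [NormedAddCommGroup N] [NormedSpace ℝ N]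
    (C : Set E₁) (Q : Set E₂) (hCne : C.Nonempty) (hCcl : IsClosed C) (hCcv : Convex ℝ C)
    (hQne : Q.Nonempty) (hQcl : IsClosed Q) (hQcv : Convex ℝ Q)
    (A : E₁ →L[ℝ] E₂) (pstar : N) (r : ℝ) (hr : 0 < r)
    (ftil : N → E₁ → E₁ → ℝ) (gtil : N → E₂ → E₂ → ℝ)
    (hfusc : ∀ x : E₁, UpperSemicontinuous fun q : N × E₁ => ftil q.1 q.2 x)
    (hgusc : ∀ y : E₂, UpperSemicontinuous fun q : N × E₂ => gtil q.1 q.2 y) :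
    LPWellPosedPerturb C Q A pstar r ftil gtil ↔
      (∀ ε : ℝ, 0 < ε → (approxSol C Q A pstar r ftil gtil ε).Nonempty) ∧
        Tendsto (fun ε : ℝ => EMetric.diam (approxSol C Q A pstar r ftil gtil ε))
          (𝓝[>] (0 : ℝ)) (nhds 0) := by
  unfold LPWellPosedPerturb GenApproxSeq
  set S := fun ε : ℝ => approxSol C Q A pstar r ftil gtil ε with hSdef
  constructor
  · rintro ⟨ustar, hSsol, hconv⟩
    have hust : ustar ∈ SEPSol C Q A (ftil pstar) (gtil pstar) := by
      rw [hSsol]; rfl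
    constructor
    · exact fun ε hε => ⟨ustar, sol_mem_approx C Q A pstar r ftil gtil hr.le hust hε.le⟩
    · by_contra hnot
      rw [ENNReal.tendsto_nhds_zero] at hnot
      push_neg at hnot
      obtain ⟨δ₀, hδ₀, hfr⟩ := hnot
      set δ : ENNReal := min δ₀ 1 with hδdef
      have hδpos : 0 < δ := lt_min hδ₀ one_pos
      have hδne : δ ≠ ⊤ := ne_top_of_le_ne_top ENNReal.one_ne_top (min_le_right _ _)
      have hhalf : δ / 2 < δ := ENNReal.half_lt_self hδpos.ne' hδne
      have hfr' : ∃ᶠ ε in 𝓝[>] (0:ℝ), δ ≤ EMetric.diam (S ε) := by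
        refine hfr.mono fun ε hε => ?_
        exact le_trans (min_le_left _ _) hε.le
      have hsel : ∀ n : ℕ, ∃ ε : ℝ, ε ∈ Ioo (0:ℝ) (1/(n+1)) ∧
          δ ≤ EMetric.diam (S ε) := by
        intro n
        have hmem : Ioo (0:ℝ) (1/(n+1)) ∈ 𝓝[>] (0:ℝ) :=
          Ioo_mem_nhdsGT_of_mem ⟨le_refl 0, by positivity⟩
        exact frequently_iff.1 hfr' hmem
      choose ε hεIoo hεdiam using hsel
      have hεpos : ∀ n, 0 < ε n := fun n => (hεIoo n).1
      have hε0 : Tendsto ε atTop (nhds 0) := by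
        refine squeeze_zero (fun n => (hεpos n).le) (fun n => (hεIoo n).2.le) ?_
        simpa [one_div] using tendsto_one_div_add_atTop_nhds_zero_nat (𝕜 := ℝ)
      have hpair : ∀ n : ℕ, ∃ a ∈ S (ε n), ∃ b ∈ S (ε n), δ / 2 < edist a b := by
        intro n
        by_contra hcon
        push_neg at hcon
        have : EMetric.diam (S (ε n)) ≤ δ / 2 :=
          EMetric.diam_le fun a ha b hb => hcon a ha b hb
        exact absurd (hεdiam n) (by
          intro h
          exact absurd (h.trans this) (not_le.2 hhalf))
      choose a ha b hb hd using hpair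
      obtain ⟨pa, hpa⟩ := genApproxSeq_of_mem C Q A pstar r ftil gtil hεpos hε0 ha
      obtain ⟨pb, hpb⟩ := genApproxSeq_of_mem C Q A pstar r ftil gtil hεpos hε0 hb
      have hta : Tendsto a atTop (nhds ustar) :=
        hconv pa a ⟨hpa.1, hpa.2.1, ε, hpa.2.2.1, hpa.2.2.2.1, hpa.2.2.2.2⟩
      have htb : Tendsto b atTop (nhds ustar) :=
        hconv pb b ⟨hpb.1, hpb.2.1, ε, hpb.2.2.1, hpb.2.2.2.1, hpb.2.2.2.2⟩
      have hedist : Tendsto (fun n => edist (a n) (b n)) atTop (nhds 0) := by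
        have := hta.edist htb
        simpa using this
      have := (hedist.eventually (Iio_mem_nhds (show (0:ENNReal) < δ/2 from
        ENNReal.half_pos hδpos.ne'))).exists
      obtain ⟨n, hn⟩ := this
      exact absurd (hd n) (not_lt.2 hn.le)
  · rintro ⟨hne, hdiam⟩
    -- construct the unique solution as a limit of approximate solutions
    set e : ℕ → ℝ := fun n => 1/(n+1) with hedef
    have hepos : ∀ n, 0 < e n := fun n => by positivity
    have he0 : Tendsto e atTop (nhds 0) := by
      simpa [hedef, one_div] using tendsto_one_div_add_atTop_nhds_zero_nat (𝕜 := ℝ)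
    have hewithin : Tendsto e atTop (𝓝[>] (0:ℝ)) :=
      tendsto_nhdsWithin_of_tendsto_nhds_of_eventually_within _ he0
        (Eventually.of_forall fun n => hepos n)
    have hdiame : Tendsto (fun n => EMetric.diam (S (e n))) atTop (nhds 0) :=
      hdiam.comp hewithin
    have hemono : ∀ {m n : ℕ}, m ≤ n → e n ≤ e m := by
      intro m n h
      apply one_div_le_one_div_of_le (by positivity)
      have : (m:ℝ) ≤ n := Nat.cast_le.2 h
      linarith
    choose u hu using fun n => hne (e n) (hepos n)
    have hcauchy : CauchySeq u := by
      rw [EMetric.cauchySeq_iff]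
      intro δ hδ
      obtain ⟨K, hK⟩ := (hdiame.eventually (Iio_mem_nhds hδ)).exists_forall_of_atTop
      refine ⟨K, fun m hm n hn => ?_⟩
      have h1 : u m ∈ S (e K) :=
        approxSol_mono C Q A pstar r ftil gtil (hemono hm) (hu m)
      have h2 : u n ∈ S (e K) :=
        approxSol_mono C Q A pstar r ftil gtil (hemono hn) (hu n)
      exact lt_of_le_of_lt (EMetric.edist_le_diam_of_mem h1 h2) (hK K le_rfl)
    obtain ⟨w, hw⟩ := cauchySeq_tendsto_of_complete hcauchy
    have hwsol : w ∈ SEPSol C Q A (ftil pstar) (gtil pstar) :=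
      limit_mem_sol C Q A pstar r ftil gtil hCne hCcl hQne hQcl hfusc hgusc he0 hu hw
    have key : ∀ z ∈ SEPSol C Q A (ftil pstar) (gtil pstar), z = w := by
      intro z hz
      have hzero : edist z w = 0 := by
        by_contra h0
        have hpos : 0 < edist z w := pos_iff_ne_zero.2 h0
        have hev : ∀ᶠ ε in 𝓝[>] (0:ℝ), EMetric.diam (S ε) < edist z w :=
          hdiam.eventually (Iio_mem_nhds hpos)
        obtain ⟨ε, hε1, hε2⟩ := (hev.and self_mem_nhdsWithin).exists
        have hzmem : z ∈ S ε := sol_mem_approx C Q A pstar r ftil gtil hr.le hz (le_of_lt hε2)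
        have hwmem : w ∈ S ε := sol_mem_approx C Q A pstar r ftil gtil hr.le hwsol (le_of_lt hε2)
        exact absurd (EMetric.edist_le_diam_of_mem hzmem hwmem) (not_le.2 hε1)
      exact edist_eq_zero.1 hzero
    refine ⟨w, ?_, ?_⟩
    · ext z
      simp only [mem_singleton_iff]
      exact ⟨fun h => key z h, fun h => h ▸ hwsol⟩
    · rintro p uu ⟨hpr, hpt, εs, hεpos, hε0, hcond⟩
      set δ : ℕ → ℝ := fun n => max (εs n) ‖p n - pstar‖ with hδdef
      have hδpos : ∀ n, 0 < δ n := fun n => lt_of_lt_of_le (hεpos n) (le_max_left _ _)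
      have hδ0 : Tendsto δ atTop (nhds 0) := by
        have hn0 : Tendsto (fun n => ‖p n - pstar‖) atTop (nhds 0) :=
          tendsto_iff_norm_sub_tendsto_zero.1 hpt
        simpa using hε0.max hn0
      have hmem : ∀ n, uu n ∈ S (δ n) := by
        intro n
        obtain ⟨hc1, hc2, hc3, hc4, hc5⟩ := hcond n
        refine ⟨p n, hpr n, le_max_right _ _, hc1.trans (le_max_left _ _),
          hc2.trans (le_max_left _ _), hc3.trans (le_max_left _ _),
          fun x hx => le_trans (neg_le_neg (le_max_left _ _)) (hc4 x hx),
          fun y hy => le_trans (neg_le_neg (le_max_left _ _)) (hc5 y hy)⟩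
      have hwmem : ∀ n, w ∈ S (δ n) := fun n =>
        sol_mem_approx C Q A pstar r ftil gtil hr.le hwsol (hδpos n).le
      have hδwithin : Tendsto δ atTop (𝓝[>] (0:ℝ)) :=
        tendsto_nhdsWithin_of_tendsto_nhds_of_eventually_within _ hδ0
          (Eventually.of_forall fun n => hδpos n)
      have hdiamδ : Tendsto (fun n => EMetric.diam (S (δ n))) atTop (nhds 0) :=
        hdiam.comp hδwithin
      have hed : Tendsto (fun n => edist (uu n) w) atTop (nhds 0) := by
        refine tendsto_of_tendsto_of_tendsto_of_le_of_le tendsto_const_nhds hdiamδ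
          (fun n => zero_le) (fun n => EMetric.edist_le_diam_of_mem (hmem n) (hwmem n))
      rw [EMetric.tendsto_atTop]
      intro η hη
      obtain ⟨K, hK⟩ := (hed.eventually (Iio_mem_nhds hη)).exists_forall_of_atTop
      exact ⟨K, fun n hn => hK n hn⟩
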